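/- Let S, I, R, B : [0,∞) → ℝ be a solution of the SIRB system S' = −βSI, I' = βSI − γI + βσαIR, R' = γI − βσIR, B' = βσ(1−α)IR with β>0, γ>0, σ>1, 0<α<1, initial conditions S(0)>0, I(0)>0, R(0)≥0, B(0)≥0 with (σβ/γ)·R(0) < 1, S(0)+I(0)+R(0)+B(0)=1, and suppose S(t)>0 and I(t)>0 for all t≥0. Define r(S) := (γ/(σβ))·(1 − (1 − (σβ/γ)·R(0))·(S/S(0))^σ), R̂(S) := (β/γ)·(S + ασ·r(S)), p(S) := (S(0) − S) + (γ/β)·ln(S/S(0)), and q(R) := (γ/(σβ))·ln((1 − (σβ/γ)R)/(1 − (σβ/γ)R(0))) + (R − R(0)). Assume ℛ₀ := R̂(S(0)) ≤ 1, (β/γ)·(S(0) + ασ²R(0)) < ασ, and R̂(S̃) > 1 where S̃ := ((β/γ)·S(0)/(σα·(1 − (σβ/γ)·R(0))))^(1/(σ−1)) · S(0); let Ŝ₂ be the larger of the two roots of R̂(S) = 1 in (0, S(0)). If I(0) + p(Ŝ₂) − α·q(r(Ŝ₂)) > 0, then there exist 0 < t₁ < t₂ such that I is monotonically increasing on [t₁,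 t₂] and monotonically decreasing on [0, t₁] and on [t₂, ∞), and I(t) → 0 as t → ∞ (the delayed epidemic). -/

import Mathlib

open Set Filter

private lemma sirb_const_Ici {f : ℝ → ℝ} {a : ℝ} (h : ∀ t, a ≤ t → HasDerivAt f 0 t) :
    ∀ t, a ≤ t → f t = f a := by
  have hc : ContinuousOn f (Set.Ici a) := fun t ht => (h t ht).continuousAt.continuousWithinAt
  have hd : ∀ x ∈ interior (Set.Ici a), DifferentiableAt ℝ f x := by
    intro x hx
    rw [interior_Ici] at hx
    exact (h x (le_of_lt hx)).differentiableAt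
  have h0 : ∀ x ∈ interior (Set.Ici a), deriv f x = 0 := by
    intro x hx
    rw [interior_Ici] at hx
    exact (h x (le_of_lt hx)).deriv
  have hm : MonotoneOn f (Set.Ici a) :=
    monotoneOn_of_deriv_nonneg (convex_Ici a) hc
      (fun x hx => (hd x hx).differentiableWithinAt) (fun x hx => (h0 x hx).ge)
  have ha : AntitoneOn f (Set.Ici a) :=
    antitoneOn_of_deriv_nonpos (convex_Ici a) hc
      (fun x hx => (hd x hx).differentiableWithinAt) (fun x hx => (h0 x hx).le)
  intro t ht
  exact le_antisymm (ha Set.self_mem_Ici ht ht) (hm Set.self_mem_Ici ht ht)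

private lemma sirb_tendsto_zero {f : ℝ → ℝ} {c C t₃ : ℝ} (hc : 0 < c)
    (h0 : ∀ t, t₃ ≤ t → 0 ≤ f t) (hb : ∀ t, t₃ ≤ t → f t ≤ C * Real.exp (-(c * t))) :
    Filter.Tendsto f Filter.atTop (nhds 0) := by
  have hct : Filter.Tendsto (fun t : ℝ => c * t) Filter.atTop Filter.atTop :=
    Filter.Tendsto.const_mul_atTop hc Filter.tendsto_id
  have hexp : Filter.Tendsto (fun t : ℝ => C * Real.exp (-(c * t))) Filter.atTop (nhds 0) := by
    have := (Real.tendsto_exp_neg_atTop_nhds_zero.comp hct).const_mul C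
    simpa using this
  exact tendsto_of_tendsto_of_tendsto_of_le_of_le' tendsto_const_nhds hexp
    (Filter.eventually_atTop.2 ⟨t₃, h0⟩) (Filter.eventually_atTop.2 ⟨t₃, hb⟩)

set_option maxHeartbeats 1000000 in
theorem sirb_delayed_epidemic (β γ σ α : ℝ) (S I R B : ℝ → ℝ)
    (hβ : 0 < β) (hγ : 0 < γ) (hσ : 1 < σ) (hα0 : 0 < α) (hα1 : α < 1)
    (hS' : ∀ t : ℝ, 0 ≤ t → HasDerivAt S (-(β * S t * I t)) t)
    (hI' : ∀ t : ℝ, 0 ≤ t → HasDerivAt I (β * S t * I t - γ * I t + β * σ * α * I t * R t) t)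
    (hR' : ∀ t : ℝ, 0 ≤ t → HasDerivAt R (γ * I t - β * σ * I t * R t) t)
    (hB' : ∀ t : ℝ, 0 ≤ t → HasDerivAt B (β * σ * (1 - α) * I t * R t) t)
    (hS0 : 0 < S 0) (hI0 : 0 < I 0) (hR0 : 0 ≤ R 0) (hB0 : 0 ≤ B 0)
    (hsum : S 0 + I 0 + R 0 + B 0 = 1)
    (hSpos : ∀ t : ℝ, 0 ≤ t → 0 < S t) (hIpos : ∀ t : ℝ, 0 ≤ t → 0 < I t)
    (hR0lt1 : σ * β / γ * R 0 < 1)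
    (r Rhat : ℝ → ℝ)
    (hr : ∀ x : ℝ, r x = γ / (σ * β) * (1 - (1 - σ * β / γ * R 0) * (x / S 0) ^ σ))
    (hRhat : ∀ x : ℝ, Rhat x = β / γ * (x + α * σ * r x))
    (p q : ℝ → ℝ)
    (hp : ∀ x : ℝ, p x = (S 0 - x) + γ / β * Real.log (x / S 0))
    (hq : ∀ x : ℝ,
      q x = γ / (σ * β) * Real.log ((1 - σ * β / γ * x) / (1 - σ * β / γ * R 0)) + (x - R 0))
    (hR0le : Rhat (S 0) ≤ 1)
    (hcase : β / γ * (S 0 + α * σ ^ 2 * R 0) < α * σ)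
    (Stilde : ℝ)
    (hSt : Stilde = (β / γ * S 0 / (σ * α * (1 - σ * β / γ * R 0))) ^ (1 / (σ - 1)) * S 0)
    (hRt : 1 < Rhat Stilde)
    (Shat2 : ℝ) (hS2a : Stilde < Shat2) (hS2b : Shat2 < S 0) (hS2root : Rhat Shat2 = 1)
    (hmin : 0 < I 0 + p Shat2 - α * q (r Shat2)) :
    ∃ t₁ t₂ : ℝ, 0 < t₁ ∧ t₁ < t₂ ∧
      StrictMonoOn I (Set.Icc t₁ t₂) ∧ StrictAntiOn I (Set.Icc 0 t₁) ∧
      StrictAntiOn I (Set.Ici t₂) ∧ Filter.Tendsto I Filter.atTop (nhds 0) := by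
  have hS0ne : S 0 ≠ 0 := ne_of_gt hS0
  have hσ0 : (0:ℝ) < σ := lt_trans one_pos hσ
  have hσ1 : (0:ℝ) < σ - 1 := by linarith
  have hσβ : (0:ℝ) < σ * β := mul_pos hσ0 hβ
  obtain ⟨k, hkdef⟩ : ∃ k : ℝ, k = 1 - σ * β / γ * R 0 := ⟨_, rfl⟩
  simp only [← hkdef] at hr hq hSt
  have hk : 0 < k := by rw [hkdef]; linarith
  -- explicit form of Rhat
  have hRhat2 : ∀ x : ℝ, Rhat x = β / γ * x + α * (1 - k * (x / S 0) ^ σ) := by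
    intro x
    rw [hRhat, hr]
    field_simp
  -- derivative of the power map
  have hu : ∀ x : ℝ, 0 < x → HasDerivAt (fun y : ℝ => (y / S 0) ^ σ)
      (σ * (x / S 0) ^ σ / x) x := by
    intro x hx
    have hx0 : x / S 0 ≠ 0 := ne_of_gt (div_pos hx hS0)
    have h1 : HasDerivAt (fun y : ℝ => y / S 0) (1 / S 0) x := by
      simpa using (hasDerivAt_id x).div_const (S 0)
    have h2 := (Real.hasDerivAt_rpow_const (p := σ) (Or.inl hx0)).comp x h1
    refine h2.congr_deriv (Eq.symm ?_)
    rw [Real.rpow_sub_one hx0]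
    field_simp
  -- the exponent-(σ-1) comparison function
  have hv : ∀ x : ℝ, 0 < x → (x / S 0) ^ σ / x = (x / S 0) ^ (σ - 1) / S 0 := by
    intro x hx
    rw [Real.rpow_sub_one (ne_of_gt (div_pos hx hS0))]
    field_simp
  have hvmono : ∀ x y : ℝ, 0 ≤ x → x < y → (x / S 0) ^ (σ - 1) < (y / S 0) ^ (σ - 1) := by
    intro x y hx hxy
    exact Real.rpow_lt_rpow (div_nonneg hx hS0.le)
      ((div_lt_div_iff_of_pos_right hS0).2 hxy) hσ1
  -- Stilde facts
  have hA : (0:ℝ) < β / γ * S 0 / (σ * α * k) := by positivity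
  have hStpos : 0 < Stilde := by
    rw [hSt]
    positivity
  have hvSt : (Stilde / S 0) ^ (σ - 1) = β / γ * S 0 / (σ * α * k) := by
    rw [hSt, mul_div_cancel_right₀ _ hS0ne, ← Real.rpow_mul hA.le, one_div,
      inv_mul_cancel₀ (ne_of_gt hσ1), Real.rpow_one]
  -- derivative of Rhat
  have hRd : ∀ x : ℝ, 0 < x → HasDerivAt Rhat
      (α * k * σ / S 0 * ((Stilde / S 0) ^ (σ - 1) - (x / S 0) ^ (σ - 1))) x := by
    intro x hx
    have he : Rhat = fun x : ℝ => β / γ * x + α * (1 - k * (x / S 0) ^ σ) := funext hRhat2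
    rw [he]
    have h1 : HasDerivAt (fun x : ℝ => β / γ * x + α * (1 - k * (x / S 0) ^ σ))
        (β / γ * 1 + α * (-(k * (σ * (x / S 0) ^ σ / x)))) x :=
      ((hasDerivAt_id x).const_mul (β / γ)).add
        ((((hu x hx).const_mul k).const_sub 1).const_mul α)
    convert h1 using 1
    rw [hvSt, mul_div_assoc (a := σ) (b := (x / S 0) ^ σ) (c := x), hv x hx]
    field_simp
    ring
  -- continuity of Rhat
  have hRcont : ∀ x : ℝ, ContinuousAt Rhat x := by
    intro x
    have he : Rhat = fun x : ℝ => β / γ * x + α * (1 - k * (x / S 0) ^ σ) := funext hRhat2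
    rw [he]
    have hcu : ContinuousAt (fun y : ℝ => (y / S 0) ^ σ) x :=
      (Real.continuousAt_rpow_const _ _ (Or.inr hσ0.le)).comp
        (continuousAt_id.div_const _)
    exact ((continuousAt_const.mul continuousAt_id).add
      (continuousAt_const.mul (continuousAt_const.sub (continuousAt_const.mul hcu))))
  -- Rhat is strictly monotone on [0, Stilde] and strictly antitone on [Stilde, ∞)
  have hRmono : StrictMonoOn Rhat (Set.Icc 0 Stilde) := by
    apply strictMonoOn_of_deriv_pos (convex_Icc 0 Stilde)
      (fun x _ => (hRcont x).continuousWithinAt)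
    intro x hx
    rw [interior_Icc] at hx
    rw [(hRd x hx.1).deriv]
    have := hvmono x Stilde hx.1.le hx.2
    have hpos : 0 < α * k * σ / S 0 := by positivity
    nlinarith
  have hRanti : StrictAntiOn Rhat (Set.Ici Stilde) := by
    apply strictAntiOn_of_deriv_neg (convex_Ici Stilde)
      (fun x _ => (hRcont x).continuousWithinAt)
    intro x hx
    rw [interior_Ici] at hx
    rw [(hRd x (lt_trans hStpos hx)).deriv]
    have := hvmono Stilde x hStpos.le hx
    have hpos : 0 < α * k * σ / S 0 := by positivity
    nlinarith
  -- existence of the smaller root Shat1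
  have hRhat0 : Rhat 0 = α := by
    rw [hRhat2, zero_div, Real.zero_rpow (ne_of_gt hσ0)]
    ring
  obtain ⟨Shat1, hS1mem, hS1root⟩ : ∃ x ∈ Set.Ioo (0:ℝ) Stilde, Rhat x = 1 := by
    have hsub := intermediate_value_Ioo (a := (0:ℝ)) (b := Stilde) hStpos.le
      (fun x _ => (hRcont x).continuousWithinAt)
    have h1 : (1:ℝ) ∈ Set.Ioo (Rhat 0) (Rhat Stilde) := by
      rw [hRhat0]; exact ⟨hα1, hRt⟩
    obtain ⟨x, hxmem, hx1⟩ := hsub h1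
    exact ⟨x, hxmem, hx1⟩
  have hS1pos : 0 < Shat1 := hS1mem.1
  have hS1lt : Shat1 < Stilde := hS1mem.2
  have hS12 : Shat1 < Shat2 := lt_trans hS1lt hS2a
  -- the three sign facts
  have fact2 : ∀ x : ℝ, Shat2 < x → Rhat x < 1 := by
    intro x hx
    have := hRanti (Set.mem_Ici.2 hS2a.le) (Set.mem_Ici.2 (le_of_lt (lt_trans hS2a hx))) hx
    rwa [hS2root] at this
  have fact3 : ∀ x : ℝ, 0 ≤ x → x < Shat1 → Rhat x < 1 := by
    intro x hx hx1
    have := hRmono (Set.mem_Icc.2 ⟨hx, le_of_lt (lt_trans hx1 hS1lt)⟩)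
      (Set.mem_Icc.2 ⟨hS1pos.le, hS1lt.le⟩) hx1
    rwa [hS1root] at this
  have fact1 : ∀ x : ℝ, Shat1 < x → x < Shat2 → 1 < Rhat x := by
    intro x hx1 hx2
    rcases le_total x Stilde with h | h
    · have := hRmono (Set.mem_Icc.2 ⟨hS1pos.le, hS1lt.le⟩)
        (Set.mem_Icc.2 ⟨(lt_trans hS1pos hx1).le, h⟩) hx1
      rwa [hS1root] at this
    · have := hRanti (Set.mem_Ici.2 h) (Set.mem_Ici.2 (le_of_lt (lt_of_le_of_lt h hx2))) hx2
      rwa [hS2root] at this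
  -- time-domain basics
  have contS : ContinuousOn S (Set.Ici 0) :=
    fun t ht => (hS' t ht).continuousAt.continuousWithinAt
  have contI : ContinuousOn I (Set.Ici 0) :=
    fun t ht => (hI' t ht).continuousAt.continuousWithinAt
  have Santi : StrictAntiOn S (Set.Ici 0) := by
    apply strictAntiOn_of_deriv_neg (convex_Ici 0) contS
    intro x hx
    rw [interior_Ici] at hx
    have hx' : (0:ℝ) < x := hx
    rw [(hS' x hx'.le).deriv]
    have h1 := hSpos x hx'.le
    have h2 := hIpos x hx'.le
    exact neg_lt_zero.2 (by positivity)
  have Sle : ∀ t : ℝ, 0 ≤ t → S t ≤ S 0 := by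
    intro t ht
    rcases eq_or_lt_of_le ht with h | h
    · rw [← h]
    · exact (Santi Set.self_mem_Ici (Set.mem_Ici.2 ht) h).le
  -- derivative of r at positive points
  have hre : r = fun x : ℝ => γ / (σ * β) * (1 - k * (x / S 0) ^ σ) := funext hr
  have hrd : ∀ x : ℝ, 0 < x →
      HasDerivAt r (-(γ * k * (x / S 0) ^ σ) / (β * x)) x := by
    intro x hx
    rw [hre]
    have h1 : HasDerivAt (fun x : ℝ => γ / (σ * β) * (1 - k * (x / S 0) ^ σ))
        (γ / (σ * β) * (-(k * (σ * (x / S 0) ^ σ / x)))) x :=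
      (((hu x hx).const_mul k).const_sub 1).const_mul (γ / (σ * β))
    convert h1 using 1
    field_simp
  -- integrating factor
  set Itld : ℝ → ℝ := fun t => I (max t 0) with hItld
  have contItld : Continuous Itld :=
    contI.comp_continuous (continuous_id.max continuous_const) (fun x => le_max_right x 0)
  set E : ℝ → ℝ := fun t => ∫ s in (0:ℝ)..t, β * σ * Itld s with hE
  have hEd : ∀ t : ℝ, HasDerivAt E (β * σ * Itld t) t := by
    intro t
    exact intervalIntegral.integral_hasDerivAt_right
      ((continuous_const.mul contItld).intervalIntegrable _ _)
      ((continuous_const.mul contItld).stronglyMeasurableAtFilter _ _)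
      (continuous_const.mul contItld).continuousAt
  -- R = r ∘ S on [0, ∞)
  have hRS : ∀ t : ℝ, 0 ≤ t → R t = r (S t) := by
    have hWd : ∀ t : ℝ, 0 ≤ t →
        HasDerivAt (fun t => (R t - r (S t)) * Real.exp (E t)) 0 t := by
      intro t ht
      have hrc : HasDerivAt (fun t => r (S t))
          ((-(γ * k * (S t / S 0) ^ σ) / (β * S t)) * (-(β * S t * I t))) t :=
        (hrd (S t) (hSpos t ht)).comp t (hS' t ht)
      have hW : HasDerivAt (fun t => R t - r (S t))
          ((γ * I t - β * σ * I t * R t) -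
            (-(γ * k * (S t / S 0) ^ σ) / (β * S t)) * (-(β * S t * I t))) t :=
        (hR' t ht).sub hrc
      have hex : HasDerivAt (fun t => Real.exp (E t)) (Real.exp (E t) * (β * σ * Itld t)) t :=
        (hEd t).exp
      have hprod := hW.mul hex
      refine hprod.congr_deriv (Eq.symm ?_)
      have hIt : Itld t = I t := by
        show I (max t 0) = I t
        rw [max_eq_left ht]
      rw [hIt, hr]
      have hSt0 : S t ≠ 0 := ne_of_gt (hSpos t ht)
      field_simp
      ring
    have hconst := sirb_const_Ici hWd
    intro t ht
    have h0 : R 0 - r (S 0) = 0 := by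
      rw [hr, div_self hS0ne, Real.one_rpow, hkdef]
      field_simp
      ring
    have h2 : (R t - r (S t)) * Real.exp (E t) = (R 0 - r (S 0)) * Real.exp (E 0) :=
      hconst t ht
    rw [h0, zero_mul] at h2
    have hexne : Real.exp (E t) ≠ 0 := Real.exp_ne_zero _
    rcases mul_eq_zero.1 h2 with h | h
    · linarith [sub_eq_zero.1 h]
    · exact absurd h hexne
  -- derivative of p at positive points
  have hpe : p = fun x : ℝ => (S 0 - x) + γ / β * Real.log (x / S 0) := funext hp
  have hpd : ∀ x : ℝ, 0 < x → HasDerivAt p (-1 + γ / (β * x)) x := by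
    intro x hx
    rw [hpe]
    have hx0 : x / S 0 ≠ 0 := ne_of_gt (div_pos hx hS0)
    have hdiv : HasDerivAt (fun y : ℝ => y / S 0) (1 / S 0) x := by
      simpa using (hasDerivAt_id x).div_const (S 0)
    have hlog : HasDerivAt (fun y : ℝ => Real.log (y / S 0)) ((x / S 0)⁻¹ * (1 / S 0)) x :=
      by have := (Real.hasDerivAt_log hx0).comp x hdiv; exact this
    have h1 : HasDerivAt (fun x : ℝ => (S 0 - x) + γ / β * Real.log (x / S 0))
        (-1 + γ / β * ((x / S 0)⁻¹ * (1 / S 0))) x := by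
      have := ((hasDerivAt_id x).const_sub (S 0)).add (hlog.const_mul (γ / β))
      exact this
    convert h1 using 1
    field_simp
  -- derivative of q where 1 - c y > 0
  have hqe : q = fun y : ℝ =>
      γ / (σ * β) * Real.log ((1 - σ * β / γ * y) / k) + (y - R 0) := funext hq
  have hqd : ∀ y : ℝ, 0 < 1 - σ * β / γ * y →
      HasDerivAt q (1 - 1 / (1 - σ * β / γ * y)) y := by
    intro y hy
    rw [hqe]
    have hin : HasDerivAt (fun y : ℝ => (1 - σ * β / γ * y) / k)
        (-(σ * β / γ * 1) / k) y :=
      (((hasDerivAt_id y).const_mul (σ * β / γ)).const_sub 1).div_const k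
    have hne : (1 - σ * β / γ * y) / k ≠ 0 := ne_of_gt (div_pos hy hk)
    have hlog := (Real.hasDerivAt_log hne).comp y hin
    have h1 : HasDerivAt (fun y : ℝ =>
        γ / (σ * β) * Real.log ((1 - σ * β / γ * y) / k) + (y - R 0))
        (γ / (σ * β) * (((1 - σ * β / γ * y) / k)⁻¹ * (-(σ * β / γ * 1) / k)) + 1) y := by
      have := (hlog.const_mul (γ / (σ * β))).add ((hasDerivAt_id y).sub_const (R 0))
      exact this
    convert h1 using 1
    have hyne : 1 - σ * β / γ * y ≠ 0 := ne_of_gt hy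
    have hyne2 : γ - σ * β * y ≠ 0 := by
      intro h
      apply hyne
      field_simp
      linarith
    rw [inv_div]
    field_simp [hyne2]
    ring
  -- positivity of 1 - c R t
  have h1cR : ∀ t : ℝ, 0 ≤ t → 0 < 1 - σ * β / γ * R t := by
    intro t ht
    have hupos : 0 < (S t / S 0) ^ σ := Real.rpow_pos_of_pos (div_pos (hSpos t ht) hS0) σ
    have heq : 1 - σ * β / γ * R t = k * (S t / S 0) ^ σ := by
      rw [hRS t ht, hr]
      field_simp
      ring
    rw [heq]
    positivity
  -- the conserved quantity
  have hIg : ∀ t : ℝ, 0 ≤ t → I t = I 0 + p (S t) - α * q (r (S t)) := by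
    have hPhid : ∀ t : ℝ, 0 ≤ t →
        HasDerivAt (fun t => I t - p (S t) + α * q (R t)) 0 t := by
      intro t ht
      have hpS := (hpd (S t) (hSpos t ht)).comp t (hS' t ht)
      have hqR := (hqd (R t) (h1cR t ht)).comp t (hR' t ht)
      have hsum := ((hI' t ht).sub hpS).add (hqR.const_mul α)
      refine hsum.congr_deriv (Eq.symm ?_)
      have hne : 1 - σ * β / γ * R t ≠ 0 := ne_of_gt (h1cR t ht)
      have hSt0 : S t ≠ 0 := ne_of_gt (hSpos t ht)
      have hne3 : γ - σ * β * R t ≠ 0 := by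
        intro h
        apply hne
        field_simp
        linarith
      have e1 : (-1 + γ / (β * S t)) * -(β * S t * I t) = β * S t * I t - γ * I t := by
        field_simp
        ring
      have e2 : (1 - 1 / (1 - σ * β / γ * R t)) * (γ * I t - β * σ * I t * R t)
          = -(σ * β * I t * R t) := by
        field_simp [hne, hne3]
        ring
      rw [e1, e2]
      ring
    have hconst := sirb_const_Ici hPhid
    intro t ht
    have hc : I t - p (S t) + α * q (R t) = I 0 - p (S 0) + α * q (R 0) := hconst t ht
    have hp0 : p (S 0) = 0 := by
      rw [hp, div_self hS0ne, Real.log_one]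
      ring
    have hq0 : q (R 0) = 0 := by
      rw [hq, ← hkdef, div_self (ne_of_gt hk), Real.log_one]
      ring
    rw [hp0, hq0, hRS t ht] at hc
    linarith
  -- derivative of g(x) = I 0 + p x - α q (r x)
  have hgd : ∀ x : ℝ, 0 < x → HasDerivAt (fun x => I 0 + p x - α * q (r x))
      (γ / (β * x) * (1 - Rhat x)) x := by
    intro x hx
    have hupos : 0 < (x / S 0) ^ σ := Real.rpow_pos_of_pos (div_pos hx hS0) σ
    have h1cr : 1 - σ * β / γ * r x = k * (x / S 0) ^ σ := by
      rw [hr]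
      field_simp
      ring
    have hkr : 0 < 1 - σ * β / γ * r x := by rw [h1cr]; positivity
    have hqr := (hqd (r x) hkr).comp x (hrd x hx)
    have hsum := ((hpd x hx).const_add (I 0)).sub (hqr.const_mul α)
    refine hsum.congr_deriv (Eq.symm ?_)
    rw [h1cr, hRhat2]
    have hkune : k * (x / S 0) ^ σ ≠ 0 := ne_of_gt (by positivity)
    field_simp
    ring
  have hS2pos : 0 < Shat2 := lt_trans hStpos hS2a
  -- monotonicity of g
  have gmono : MonotoneOn (fun x => I 0 + p x - α * q (r x)) (Set.Icc Shat2 (S 0)) := by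
    apply monotoneOn_of_deriv_nonneg (convex_Icc _ _)
      (fun x hx => (hgd x (lt_of_lt_of_le hS2pos hx.1)).continuousAt.continuousWithinAt)
    · intro x hx
      rw [interior_Icc] at hx
      exact (hgd x (lt_trans hS2pos hx.1)).differentiableAt.differentiableWithinAt
    · intro x hx
      rw [interior_Icc] at hx
      have hx0 : 0 < x := lt_trans hS2pos hx.1
      rw [(hgd x hx0).deriv]
      have := fact2 x hx.1
      have h1 : 0 < γ / (β * x) := by positivity
      nlinarith
  have ganti : AntitoneOn (fun x => I 0 + p x - α * q (r x)) (Set.Icc Shat1 Shat2) := by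
    apply antitoneOn_of_deriv_nonpos (convex_Icc _ _)
      (fun x hx => (hgd x (lt_of_lt_of_le hS1pos hx.1)).continuousAt.continuousWithinAt)
    · intro x hx
      rw [interior_Icc] at hx
      exact (hgd x (lt_trans hS1pos hx.1)).differentiableAt.differentiableWithinAt
    · intro x hx
      rw [interior_Icc] at hx
      have hx0 : 0 < x := lt_trans hS1pos hx.1
      rw [(hgd x hx0).deriv]
      have := fact1 x hx.1 hx.2
      have h1 : 0 < γ / (β * x) := by positivity
      nlinarith
  -- lower bound for g on [Shat1, S 0]
  have hlow : ∀ x : ℝ, Shat1 ≤ x → x ≤ S 0 →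
      I 0 + p Shat2 - α * q (r Shat2) ≤ I 0 + p x - α * q (r x) := by
    intro x h1 h2
    rcases le_total x Shat2 with h | h
    · have := ganti (Set.mem_Icc.2 ⟨h1, h⟩) (Set.mem_Icc.2 ⟨hS12.le, le_refl _⟩) h
      simpa using this
    · have := gmono (Set.mem_Icc.2 ⟨le_refl _, hS2b.le⟩) (Set.mem_Icc.2 ⟨h, h2⟩) h
      simpa using this
  have hIlow : ∀ t : ℝ, 0 ≤ t → Shat1 ≤ S t →
      I 0 + p Shat2 - α * q (r Shat2) ≤ I t := by
    intro t ht h1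
    rw [hIg t ht]
    exact hlow _ h1 (Sle t ht)
  -- S eventually drops below Shat1
  have hex : ∃ T : ℝ, 0 < T ∧ S T < Shat1 := by
    by_contra hcon
    push_neg at hcon
    have hall : ∀ t : ℝ, 0 ≤ t → Shat1 ≤ S t := by
      intro t ht
      rcases eq_or_lt_of_le ht with h | h
      · rw [← h]; exact (lt_trans hS12 hS2b).le
      · exact hcon t h
    set m : ℝ := I 0 + p Shat2 - α * q (r Shat2) with hmdef
    have hbpos : 0 < β * Shat1 * m := by positivity
    have hfd : ∀ t : ℝ, 0 ≤ t →
        HasDerivAt (fun t => S t + (β * Shat1 * m) * t) (-(β * S t * I t) + β * Shat1 * m) t := by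
      intro t ht
      have := (hS' t ht).add ((hasDerivAt_id t).const_mul (β * Shat1 * m))
      exact this.congr_deriv (by simp)
    have hanti : AntitoneOn (fun t => S t + (β * Shat1 * m) * t) (Set.Ici 0) := by
      apply antitoneOn_of_deriv_nonpos (convex_Ici 0)
        (fun t ht => (hfd t ht).continuousAt.continuousWithinAt)
      · intro x hx
        rw [interior_Ici] at hx
        exact (hfd x (le_of_lt hx)).differentiableAt.differentiableWithinAt
      · intro x hx
        rw [interior_Ici] at hx
        have hx0 : (0:ℝ) ≤ x := le_of_lt hx
        rw [(hfd x hx0).deriv]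
        have h1 := hall x hx0
        have h2 := hIlow x hx0 h1
        have h3 := mul_le_mul h1 h2 hmin.le (hSpos x hx0).le
        nlinarith
    set T : ℝ := S 0 / (β * Shat1 * m) with hTdef
    have hTpos : 0 < T := by positivity
    have := hanti Set.self_mem_Ici (Set.mem_Ici.2 hTpos.le) hTpos.le
    simp only [mul_zero, add_zero] at this
    have hTm : (β * Shat1 * m) * T = S 0 := by
      rw [hTdef]
      field_simp
    rw [hTm] at this
    have := hSpos T hTpos.le
    linarith
  obtain ⟨T, hTpos, hTS⟩ := hex
  -- crossing times
  have contST : ContinuousOn S (Set.Icc 0 T) := contS.mono (Set.Icc_subset_Ici_self)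
  obtain ⟨t₁, ht₁mem, ht₁⟩ : ∃ t ∈ Set.Ioo (0:ℝ) T, S t = Shat2 := by
    have h2 : Shat2 ∈ Set.Ioo (S T) (S 0) := ⟨lt_trans hTS hS12, hS2b⟩
    obtain ⟨t, htmem, ht⟩ := intermediate_value_Ioo' hTpos.le contST h2
    exact ⟨t, htmem, ht⟩
  obtain ⟨t₂, ht₂mem, ht₂⟩ : ∃ t ∈ Set.Ioo (0:ℝ) T, S t = Shat1 := by
    have h2 : Shat1 ∈ Set.Ioo (S T) (S 0) := ⟨hTS, lt_trans hS12 hS2b⟩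
    obtain ⟨t, htmem, ht⟩ := intermediate_value_Ioo' hTpos.le contST h2
    exact ⟨t, htmem, ht⟩
  have ht1pos : 0 < t₁ := ht₁mem.1
  have ht2pos : 0 < t₂ := ht₂mem.1
  have h12 : t₁ < t₂ := by
    rcases lt_trichotomy t₁ t₂ with h | h | h
    · exact h
    · exfalso; rw [← ht₁, ← ht₂, h] at hS12; exact lt_irrefl _ hS12
    · exfalso
      have := Santi (Set.mem_Ici.2 ht2pos.le) (Set.mem_Ici.2 ht1pos.le) h
      rw [ht₁, ht₂] at this
      exact lt_irrefl _ (lt_trans hS12 this)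
  -- derivative identity for I
  have hIdent : ∀ t : ℝ, 0 ≤ t →
      β * S t * I t - γ * I t + β * σ * α * I t * R t = γ * I t * (Rhat (S t) - 1) := by
    intro t ht
    rw [hRS t ht, hRhat]
    field_simp
    ring
  have hderivI : ∀ t : ℝ, 0 ≤ t → deriv I t = γ * I t * (Rhat (S t) - 1) := by
    intro t ht
    rw [(hI' t ht).deriv]
    exact hIdent t ht
  -- monotonicity of I on the three regions
  have mono1 : StrictMonoOn I (Set.Icc t₁ t₂) := by
    apply strictMonoOn_of_deriv_pos (convex_Icc _ _)
      (contI.mono (fun x hx => le_trans ht1pos.le hx.1))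
    intro x hx
    rw [interior_Icc] at hx
    have hx0 : 0 < x := lt_trans ht1pos hx.1
    rw [hderivI x hx0.le]
    have hS2x : S x < Shat2 := by
      rw [← ht₁]
      exact Santi (Set.mem_Ici.2 ht1pos.le) (Set.mem_Ici.2 hx0.le) hx.1
    have hS1x : Shat1 < S x := by
      rw [← ht₂]
      exact Santi (Set.mem_Ici.2 hx0.le) (Set.mem_Ici.2 (lt_trans hx0 hx.2).le) hx.2
    have h1 := fact1 (S x) hS1x hS2x
    have h2 := hIpos x hx0.le
    exact mul_pos (mul_pos hγ h2) (by linarith)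
  have anti1 : StrictAntiOn I (Set.Icc 0 t₁) := by
    apply strictAntiOn_of_deriv_neg (convex_Icc _ _)
      (contI.mono (fun x hx => hx.1))
    intro x hx
    rw [interior_Icc] at hx
    have hx0 : 0 < x := hx.1
    rw [hderivI x hx0.le]
    have hS2x : Shat2 < S x := by
      rw [← ht₁]
      exact Santi (Set.mem_Ici.2 hx0.le) (Set.mem_Ici.2 ht1pos.le) hx.2
    have h1 := fact2 (S x) hS2x
    have h2 := hIpos x hx0.le
    exact mul_neg_of_pos_of_neg (mul_pos hγ h2) (by linarith)
  have anti2 : StrictAntiOn I (Set.Ici t₂) := by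
    apply strictAntiOn_of_deriv_neg (convex_Ici _)
      (contI.mono (fun x hx => le_trans ht2pos.le hx))
    intro x hx
    rw [interior_Ici] at hx
    have hx0 : 0 < x := lt_trans ht2pos hx
    rw [hderivI x hx0.le]
    have hS1x : S x < Shat1 := by
      rw [← ht₂]
      exact Santi (Set.mem_Ici.2 ht2pos.le) (Set.mem_Ici.2 hx0.le) hx
    have h1 := fact3 (S x) (hSpos x hx0.le).le hS1x
    have h2 := hIpos x hx0.le
    exact mul_neg_of_pos_of_neg (mul_pos hγ h2) (by linarith)
  -- I tends to zero
  have htends : Filter.Tendsto I Filter.atTop (nhds 0) := by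
    obtain ⟨t₃, ht₃def⟩ : ∃ t₃ : ℝ, t₃ = t₂ + 1 := ⟨_, rfl⟩
    have ht3pos : 0 < t₃ := by rw [ht₃def]; linarith
    have hs3lt : S t₃ < Shat1 := by
      rw [← ht₂]
      exact Santi (Set.mem_Ici.2 ht2pos.le) (Set.mem_Ici.2 ht3pos.le) (by rw [ht₃def]; exact lt_add_one t₂)
    have hs3pos : 0 < S t₃ := hSpos t₃ ht3pos.le
    have hδ : Rhat (S t₃) < 1 := fact3 _ hs3pos.le hs3lt
    obtain ⟨δ, hδdef⟩ : ∃ δ : ℝ, δ = 1 - Rhat (S t₃) := ⟨_, rfl⟩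
    have hδpos : 0 < δ := by rw [hδdef]; linarith
    have hRle : ∀ t : ℝ, t₃ ≤ t → Rhat (S t) ≤ Rhat (S t₃) := by
      intro t ht
      rcases eq_or_lt_of_le ht with h | h
      · rw [← h]
      · have hSt : S t < S t₃ := Santi (Set.mem_Ici.2 ht3pos.le)
          (Set.mem_Ici.2 (lt_trans ht3pos h).le) h
        have hmem1 : S t ∈ Set.Icc 0 Stilde :=
          ⟨(hSpos t (lt_trans ht3pos h).le).le,
            le_of_lt (lt_trans hSt (lt_trans hs3lt hS1lt))⟩
        have hmem2 : S t₃ ∈ Set.Icc 0 Stilde :=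
          ⟨hs3pos.le, (lt_trans hs3lt hS1lt).le⟩
        exact (hRmono.monotoneOn hmem1 hmem2 hSt.le)
    have hh : ∀ t : ℝ, t₃ ≤ t → HasDerivAt (fun t => I t * Real.exp (γ * δ * t))
        ((β * S t * I t - γ * I t + β * σ * α * I t * R t) * Real.exp (γ * δ * t) +
          I t * (Real.exp (γ * δ * t) * (γ * δ))) t := by
      intro t ht
      have ht0 : (0:ℝ) ≤ t := le_trans ht3pos.le ht
      have hexp : HasDerivAt (fun t : ℝ => Real.exp (γ * δ * t))
          (Real.exp (γ * δ * t) * (γ * δ)) t := by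
        have := (((hasDerivAt_id t).const_mul (γ * δ))).exp
        simpa using this
      exact (hI' t ht0).mul hexp
    have hanti3 : AntitoneOn (fun t => I t * Real.exp (γ * δ * t)) (Set.Ici t₃) := by
      apply antitoneOn_of_deriv_nonpos (convex_Ici _)
        (fun t ht => (hh t ht).continuousAt.continuousWithinAt)
      · intro x hx
        rw [interior_Ici] at hx
        exact (hh x hx.le).differentiableAt.differentiableWithinAt
      · intro x hx
        rw [interior_Ici] at hx
        have hx0 : (0:ℝ) ≤ x := le_trans ht3pos.le hx.le
        rw [(hh x hx.le).deriv, hIdent x hx0]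
        have h1 : Rhat (S x) - 1 ≤ -δ := by
          have := hRle x hx.le
          rw [hδdef]
          linarith
        have h2 := hIpos x hx0
        have h3 := Real.exp_pos (γ * δ * x)
        have key : γ * I x * (Rhat (S x) - 1) + I x * (γ * δ) ≤ 0 := by
          have h4 : γ * I x * (Rhat (S x) - 1) ≤ γ * I x * (-δ) :=
            mul_le_mul_of_nonneg_left h1 (mul_pos hγ h2).le
          have h5 : γ * I x * (-δ) + I x * (γ * δ) = 0 := by ring
          linarith
        have e : γ * I x * (Rhat (S x) - 1) * Real.exp (γ * δ * x) +
            I x * (Real.exp (γ * δ * x) * (γ * δ)) =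
            (γ * I x * (Rhat (S x) - 1) + I x * (γ * δ)) * Real.exp (γ * δ * x) := by ring
        rw [e]
        exact mul_nonpos_of_nonpos_of_nonneg key h3.le
    have hbound : ∀ t : ℝ, t₃ ≤ t →
        I t ≤ (I t₃ * Real.exp (γ * δ * t₃)) * Real.exp (-(γ * δ * t)) := by
      intro t ht
      have hstep := hanti3 Set.self_mem_Ici (Set.mem_Ici.2 ht) ht
      simp only at hstep
      rw [Real.exp_neg, ← div_eq_mul_inv]
      exact (le_div_iff₀ (Real.exp_pos _)).2 hstep
    have hγδ : 0 < γ * δ := by positivity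
    exact sirb_tendsto_zero (c := γ * δ) (C := I t₃ * Real.exp (γ * δ * t₃)) hγδ
      (fun t ht => (hIpos t (le_trans ht3pos.le ht)).le) hbound
  exact ⟨t₁, t₂, ht1pos, h12, mono1, anti1, anti2, htends⟩
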